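/- In the fixed-design GLS setting with compound-symmetry covariance, i.e. Cov(y_i, y_j) = σ_ε² δ_{ij} + ρ for all i, j with σ_ε² > 0 and ρ ≥ 0 (so Σ_{-k} = σ_ε² I_{n−1} + ρ 1_{n−1} 1_{n−1}^t and σ_{-k,k} = ρ 1_{n−1} for every k), under the hypotheses of Theorem 2 and with Cov((y_tr)_j, y_te) = 0 for all j, the CV bias of GLS equals w_cv = (2/n) · (ρ/(σ_ε² + ρ(n−1))) · ∑_{k=1}^n x_k^t (X_{-k}^t Σ_{-k}^{-1} X_{-k})^{-1} X_{-k}^t 1_{n−1}. (The paper's explicit formula for the CV bias of GLS when Cov(y, y) = σ_ε² I + ρ 1 1^t.) -/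

import Mathlib

open MeasureTheory Matrix

/-- Variance `E[(U - E U)^2]` of a real random variable. -/
noncomputable def eVar {Ω : Type*} [MeasurableSpace Ω] (μ : Measure Ω) (U : Ω → ℝ) : ℝ :=
  ∫ ω, (U ω - ∫ ω', U ω' ∂μ) ^ 2 ∂μ

/-- Covariance `E[(U - E U)(V - E V)]` of two real random variables. -/
noncomputable def eCov {Ω : Type*} [MeasurableSpace Ω] (μ : Measure Ω) (U V : Ω → ℝ) : ℝ :=
  ∫ ω, (U ω - ∫ ω', U ω' ∂μ) * (V ω - ∫ ω', V ω' ∂μ) ∂μ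

section Helpers
variable {Ω : Type*} [MeasurableSpace Ω] {μ : Measure Ω} [IsProbabilityMeasure μ]

lemma integrable_of_memL2 {U : Ω → ℝ} (hU : MemLp U 2 μ) : Integrable U μ :=
  hU.integrable one_le_two

lemma integrable_mul_of_memL2 {U V : Ω → ℝ} (hU : MemLp U 2 μ) (hV : MemLp V 2 μ) :
    Integrable (fun ω => U ω * V ω) μ := by
  have h1 := (hU.add hV).integrable_sq
  have h2 := (hU.sub hV).integrable_sq
  have h3 := (h1.sub h2).const_mul (4⁻¹ : ℝ)
  exact h3.congr (Filter.Eventually.of_forall fun ω => by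
    simp only [Pi.add_apply, Pi.sub_apply]; ring)

lemma memL2_sum {ι : Type*} [Fintype ι] (c : ι → ℝ) {f : ι → Ω → ℝ}
    (hf : ∀ i, MemLp (f i) 2 μ) : MemLp (fun ω => ∑ i, c i * f i ω) 2 μ := by
  have h := memLp_finset_sum (p := 2) (μ := μ) Finset.univ
    (f := fun i ω => c i * f i ω) (fun i _ => (hf i).const_mul (c i))
  simpa using h

lemma eVar_eq {U : Ω → ℝ} (hU : MemLp U 2 μ) :
    eVar μ U = (∫ ω, (U ω) ^ 2 ∂μ) - (∫ ω, U ω ∂μ) ^ 2 := by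
  have hInt : Integrable U μ := integrable_of_memL2 hU
  have hsq := hU.integrable_sq
  simp only [eVar]
  set a := ∫ ω', U ω' ∂μ with ha
  have h1 : (∫ ω, (U ω - a) ^ 2 ∂μ)
      = ∫ ω, ((U ω) ^ 2 - 2 * a * U ω + a ^ 2) ∂μ :=
    integral_congr_ae (Filter.Eventually.of_forall fun ω => by ring)
  have i1 : Integrable (fun ω => U ω ^ 2 - 2 * a * U ω) μ := hsq.sub (hInt.const_mul _)
  rw [h1, integral_add i1 (integrable_const _),
    integral_sub hsq (hInt.const_mul (2 * a)), integral_const_mul, integral_const]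
  simp [← ha]
  ring

lemma eCov_expand {U V : Ω → ℝ} (hU : MemLp U 2 μ) (hV : MemLp V 2 μ) :
    eCov μ U V = (∫ ω, U ω * V ω ∂μ) - (∫ ω, U ω ∂μ) * (∫ ω, V ω ∂μ) := by
  have hIU : Integrable U μ := integrable_of_memL2 hU
  have hIV : Integrable V μ := integrable_of_memL2 hV
  have hUV := integrable_mul_of_memL2 hU hV
  simp only [eCov]
  set a := ∫ ω', U ω' ∂μ with ha
  set b := ∫ ω', V ω' ∂μ with hb
  have h1 : (∫ ω, (U ω - a) * (V ω - b) ∂μ)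
      = ∫ ω, (U ω * V ω - (b * U ω + (a * V ω - a * b))) ∂μ :=
    integral_congr_ae (Filter.Eventually.of_forall fun ω => by ring)
  have i2 : Integrable (fun ω => a * V ω - a * b) μ := (hIV.const_mul a).sub (integrable_const _)
  have i3 : Integrable (fun ω => b * U ω + (a * V ω - a * b)) μ := (hIU.const_mul b).add i2
  rw [h1, integral_sub hUV i3, integral_add (hIU.const_mul b) i2,
    integral_sub (hIV.const_mul a) (integrable_const _),
    integral_const_mul, integral_const_mul, integral_const]
  simp [← ha, ← hb]
  ring

lemma eCov_comm (U V : Ω → ℝ) : eCov μ U V = eCov μ V U := by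
  simp only [eCov]
  exact integral_congr_ae (Filter.Eventually.of_forall fun ω => mul_comm _ _)

lemma integral_sub_sq {U V : Ω → ℝ} (hU : MemLp U 2 μ) (hV : MemLp V 2 μ) :
    ∫ ω, (U ω - V ω) ^ 2 ∂μ
      = eVar μ U + eVar μ V - 2 * eCov μ U V
        + (∫ ω, U ω ∂μ - ∫ ω, V ω ∂μ) ^ 2 := by
  have hUV := integrable_mul_of_memL2 hU hV
  have h1 : (∫ ω, (U ω - V ω) ^ 2 ∂μ)
      = ∫ ω, ((U ω) ^ 2 - (2 * (U ω * V ω) - (V ω) ^ 2)) ∂μ :=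
    integral_congr_ae (Filter.Eventually.of_forall fun ω => by ring)
  have i4 : Integrable (fun ω => 2 * (U ω * V ω) - V ω ^ 2) μ := (hUV.const_mul 2).sub hV.integrable_sq
  rw [h1, integral_sub hU.integrable_sq i4,
    integral_sub (hUV.const_mul 2) hV.integrable_sq, integral_const_mul,
    eVar_eq hU, eVar_eq hV, eCov_expand hU hV]
  ring

lemma eCov_sum {ι : Type*} [Fintype ι] {U : Ω → ℝ} (hU : MemLp U 2 μ) (c : ι → ℝ)
    {f : ι → Ω → ℝ} (hf : ∀ i, MemLp (f i) 2 μ) :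
    eCov μ U (fun ω => ∑ i, c i * f i ω) = ∑ i, c i * eCov μ U (f i) := by
  rw [eCov_expand hU (memL2_sum c hf)]
  have h1 : (∫ ω, U ω * ∑ i, c i * f i ω ∂μ) = ∑ i, c i * ∫ ω, U ω * f i ω ∂μ := by
    have e : (fun ω => U ω * ∑ i, c i * f i ω)
        = fun ω => ∑ i, c i * (U ω * f i ω) := by
      funext ω; rw [Finset.mul_sum]; exact Finset.sum_congr rfl fun i _ => by ring
    rw [e, integral_finset_sum _ (fun i _ =>
      (integrable_mul_of_memL2 hU (hf i)).const_mul (c i))]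
    exact Finset.sum_congr rfl fun i _ => integral_const_mul _ _
  have h2 : (∫ ω, (∑ i, c i * f i ω) ∂μ) = ∑ i, c i * ∫ ω, f i ω ∂μ := by
    rw [integral_finset_sum _ (fun i _ => (integrable_of_memL2 (hf i)).const_mul (c i))]
    exact Finset.sum_congr rfl fun i _ => integral_const_mul _ _
  rw [h1, h2, Finset.mul_sum, ← Finset.sum_sub_distrib]
  exact Finset.sum_congr rfl fun i _ => by rw [eCov_expand hU (hf i)]; ring

end Helpers

/-- **The paper's explicit formula for the CV bias of GLS under a compound-symmetry
covariance** `Cov(y_i, y_j) = σ_ε² δ_{ij} + ρ`: under the hypotheses of Theorem 2 and with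
`Cov(y_tr, y_te) = 0`,
`w_cv = (2/n) (ρ/(σ_ε² + ρ(n−1))) ∑_k x_k^t (X_{-k}^t Σ_{-k}^{-1} X_{-k})^{-1} X_{-k}^t 1_{n−1}`. -/
theorem cv_bias_gls_compound_symmetry
    {Ω : Type*} [MeasurableSpace Ω] (μ : Measure Ω) [IsProbabilityMeasure μ]
    (n p : ℕ) (hn : 0 < n) (σε2 ρ : ℝ) (hσ : 0 < σε2) (hρ : 0 ≤ ρ)
    (y : Fin n → Ω → ℝ) (hy : ∀ k, MemLp (y k) 2 μ)
    (emb : Fin n → Fin (n - 1) → Fin n)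
    (hembinj : ∀ k, Function.Injective (emb k))
    (hembne : ∀ k j, emb k j ≠ k)
    (x : Fin n → Fin p → ℝ)
    (Xdel : Fin n → Matrix (Fin (n - 1)) (Fin p) ℝ)
    (hXdel : ∀ k j, Xdel k j = x (emb k j))
    (hcov : ∀ i j, eCov μ (y i) (y j) = (if i = j then σε2 else 0) + ρ)
    (Sigdel : Fin n → Matrix (Fin (n - 1)) (Fin (n - 1)) ℝ)
    (hSigdel : ∀ k i j, Sigdel k i j = eCov μ (y (emb k i)) (y (emb k j)))
    (hSigdelinv : ∀ k, IsUnit (Sigdel k).det)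
    (hXSX : ∀ k, IsUnit ((Xdel k)ᵀ * (Sigdel k)⁻¹ * Xdel k).det)
    (H : Matrix (Fin n) (Fin n) ℝ)
    (hHdiag : ∀ k, H k k = 0)
    (hHrow : ∀ k j, H k (emb k j)
      = Matrix.vecMul (x k)
          (((Xdel k)ᵀ * (Sigdel k)⁻¹ * Xdel k)⁻¹ * (Xdel k)ᵀ * (Sigdel k)⁻¹) j)
    (ytr : Fin (n - 1) → Ω → ℝ) (hytr : ∀ j, MemLp (ytr j) 2 μ)
    (yte : Ω → ℝ) (hyte : MemLp yte 2 μ)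
    (hte : Fin (n - 1) → ℝ)
    (hmean : ∀ k, ∫ ω, y k ω ∂μ = ∫ ω, yte ω ∂μ)
    (hvar : ∀ k, eVar μ (y k) = eVar μ yte)
    (hmeanH : ∀ k, ∫ ω, (∑ j, H k j * y j ω) ∂μ = ∫ ω, (∑ j, hte j * ytr j ω) ∂μ)
    (hvarH : ∀ k, eVar μ (fun ω => ∑ j, H k j * y j ω)
        = eVar μ (fun ω => ∑ j, hte j * ytr j ω))
    (hc : ∀ j, eCov μ (ytr j) yte = 0) :
    (∫ ω, (yte ω - ∑ j, hte j * ytr j ω) ^ 2 ∂μ)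
        - (1 / (n : ℝ)) * ∫ ω, ∑ k, (y k ω - ∑ j, H k j * y j ω) ^ 2 ∂μ
      = (2 / (n : ℝ)) * (ρ / (σε2 + ρ * ((n : ℝ) - 1))) * ∑ k,
          (Matrix.vecMul (x k) (((Xdel k)ᵀ * (Sigdel k)⁻¹ * Xdel k)⁻¹ * (Xdel k)ᵀ))
            ⬝ᵥ (fun _ => (1 : ℝ)) := by
  classical
  have hn' : (n : ℝ) ≠ 0 := Nat.cast_ne_zero.mpr hn.ne'
  have h1n : (1 : ℝ) ≤ (n : ℝ) := by exact_mod_cast hn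
  set s : ℝ := σε2 + ρ * ((n : ℝ) - 1) with hs_def
  have hs_pos : 0 < s := by
    have : 0 ≤ ρ * ((n : ℝ) - 1) := mul_nonneg hρ (by linarith)
    simp only [hs_def]; linarith
  have hcard : ((n - 1 : ℕ) : ℝ) = (n : ℝ) - 1 := by
    rw [Nat.cast_sub hn]; simp
  -- L2 membership of the combinations
  have hS2 : MemLp (fun ω => ∑ j, hte j * ytr j ω) 2 μ := memL2_sum hte hytr
  have hT2 : ∀ k, MemLp (fun ω => ∑ j, H k j * y j ω) 2 μ := fun k => memL2_sum (H k) hy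
  -- covariance of test residual terms
  have hcovS : eCov μ yte (fun ω => ∑ j, hte j * ytr j ω) = 0 := by
    rw [eCov_sum hyte hte hytr]
    exact Finset.sum_eq_zero fun j _ => by rw [eCov_comm, hc j, mul_zero]
  have h1 : (∫ ω, (yte ω - ∑ j, hte j * ytr j ω) ^ 2 ∂μ)
      = eVar μ yte + eVar μ (fun ω => ∑ j, hte j * ytr j ω)
        + (∫ ω, yte ω ∂μ - ∫ ω, (∑ j, hte j * ytr j ω) ∂μ) ^ 2 := by
    rw [integral_sub_sq hyte hS2, hcovS]; ring
  have hcovT : ∀ k, eCov μ (y k) (fun ω => ∑ j, H k j * y j ω) = ρ * ∑ j, H k j := by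
    intro k
    rw [eCov_sum (hy k) (H k) hy]
    calc ∑ j, H k j * eCov μ (y k) (y j)
        = ∑ j, (ρ * H k j + if k = j then H k j * σε2 else 0) :=
          Finset.sum_congr rfl fun j _ => by
            rw [hcov k j]; split_ifs with h <;> ring
      _ = ρ * ∑ j, H k j := by
          rw [Finset.sum_add_distrib, Finset.sum_ite_eq, ← Finset.mul_sum]
          simp [hHdiag k]
  have h2 : ∀ k, (∫ ω, (y k ω - ∑ j, H k j * y j ω) ^ 2 ∂μ)
      = (eVar μ yte + eVar μ (fun ω => ∑ j, hte j * ytr j ω)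
          + (∫ ω, yte ω ∂μ - ∫ ω, (∑ j, hte j * ytr j ω) ∂μ) ^ 2)
        - 2 * (ρ * ∑ j, H k j) := by
    intro k
    rw [integral_sub_sq (hy k) (hT2 k), hvar k, hvarH k, hcovT k, hmean k, hmeanH k]
    ring
  have h3 : (∫ ω, ∑ k, (y k ω - ∑ j, H k j * y j ω) ^ 2 ∂μ)
      = ∑ k, ∫ ω, (y k ω - ∑ j, H k j * y j ω) ^ 2 ∂μ :=
    integral_finset_sum _ fun k _ =>
      (((hy k).sub (hT2 k)).integrable_sq).congr
        (Filter.Eventually.of_forall fun ω => by simp [Pi.sub_apply])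
  -- the matrix computation
  have hones : ∀ k, (Sigdel k)⁻¹ *ᵥ (fun _ => (1 : ℝ)) = s⁻¹ • (fun _ => (1 : ℝ)) := by
    intro k
    have hSig : Sigdel k *ᵥ (fun _ => (1 : ℝ)) = s • (fun _ => (1 : ℝ)) := by
      funext i
      simp only [mulVec, dotProduct, mul_one, Pi.smul_apply, smul_eq_mul]
      have : ∀ j, Sigdel k i j = (if i = j then σε2 else 0) + ρ := by
        intro j
        rw [hSigdel, hcov]; simp only [(hembinj k).eq_iff]
      rw [Finset.sum_congr rfl fun j _ => this j, Finset.sum_add_distrib,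
        Finset.sum_ite_eq, Finset.sum_const, Finset.card_univ, Fintype.card_fin,
        nsmul_eq_mul, hcard]
      simp [hs_def]; ring
    have h := congrArg (fun v => (Sigdel k)⁻¹ *ᵥ v) hSig
    simp only [mulVec_mulVec, Matrix.nonsing_inv_mul _ (hSigdelinv k), one_mulVec,
      mulVec_smul] at h
    have h2 := congrArg (fun v => s⁻¹ • v) h
    simp only [smul_smul, inv_mul_cancel₀ hs_pos.ne', one_smul] at h2
    exact h2.symm
  have hrowsum : ∀ k, ∑ j, H k j
      = s⁻¹ * ((Matrix.vecMul (x k) (((Xdel k)ᵀ * (Sigdel k)⁻¹ * Xdel k)⁻¹ * (Xdel k)ᵀ))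
          ⬝ᵥ (fun _ => (1 : ℝ))) := by
    intro k
    have himg : Finset.image (emb k) Finset.univ = Finset.univ.erase k := by
      apply Finset.eq_of_subset_of_card_le
      · intro j hj
        obtain ⟨i, _, rfl⟩ := Finset.mem_image.mp hj
        exact Finset.mem_erase.mpr ⟨hembne k i, Finset.mem_univ _⟩
      · rw [Finset.card_erase_of_mem (Finset.mem_univ k),
          Finset.card_image_of_injective _ (hembinj k)]
        simp
    have hsum1 : ∑ j, H k j = ∑ i : Fin (n - 1), H k (emb k i) := by
      rw [← Finset.add_sum_erase _ _ (Finset.mem_univ k), hHdiag, zero_add, ← himg,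
        Finset.sum_image fun i _ j _ h => hembinj k h]
    rw [hsum1]
    have hsum2 : ∑ i : Fin (n - 1), H k (emb k i)
        = (Matrix.vecMul (x k)
            (((Xdel k)ᵀ * (Sigdel k)⁻¹ * Xdel k)⁻¹ * (Xdel k)ᵀ * (Sigdel k)⁻¹))
          ⬝ᵥ (fun _ => (1 : ℝ)) := by
      simp only [dotProduct, mul_one]
      exact Finset.sum_congr rfl fun i _ => hHrow k i
    rw [hsum2, ← dotProduct_mulVec, ← mulVec_mulVec, hones k,
      mulVec_smul, dotProduct_smul, dotProduct_mulVec]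
    simp [smul_eq_mul]
  -- put everything together
  rw [h1, h3, Finset.sum_congr rfl fun k _ => h2 k, Finset.sum_sub_distrib,
    Finset.sum_const, Finset.card_univ, Fintype.card_fin, nsmul_eq_mul]
  have h5 : ∑ k, 2 * (ρ * ∑ j, H k j)
      = 2 * ρ * s⁻¹ * ∑ k,
          (Matrix.vecMul (x k) (((Xdel k)ᵀ * (Sigdel k)⁻¹ * Xdel k)⁻¹ * (Xdel k)ᵀ))
            ⬝ᵥ (fun _ => (1 : ℝ)) := by
    rw [Finset.mul_sum]
    exact Finset.sum_congr rfl fun k _ => by rw [hrowsum k]; ring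
  rw [h5]
  field_simp
  ring
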